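/- Property 3 (no inserted idle time is needed when the old-job order is preserved). Assume the initial schedule π* of the old jobs has no inserted idle time (the old jobs are processed consecutively from time 0). Let σ be any schedule of J = J^O ∪ J^N that preserves the old-job order of π*, and let σ₀ be the no-idle schedule that processes the jobs of J in the same relative order as σ, consecutively from time 0. Then Δmax(σ₀) ≤ Δmax(σ) and Δ̄(σ₀) ≤ Δ̄(σ), and for any family of regular costs f_j, f_max(σ₀) ≤ f_max(σ) and f̄(σ₀) ≤ f̄(σ). Consequently, if an optimal solution of a rescheduling problem with regular objective and disruption constraint has old jobs ordered as in π*, there is an optimal solution without inserted idle times. -/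

import Mathlib

open Finset

/-- A schedule of the job set `K`: each job gets a start time, and the processing
intervals `[S j, S j + p j)` of distinct jobs are pairwise disjoint. -/
def IsSchedule (K : Finset ℕ) (p S : ℕ → ℕ) : Prop :=
  ∀ i ∈ K, ∀ j ∈ K, i ≠ j → S i + p i ≤ S j ∨ S j + p j ≤ S i

/-- No inserted idle time: the processing intervals exactly partition `[0, Σ p)`
(jobs are processed consecutively from time 0). -/
def NoIdle (K : Finset ℕ) (p S : ℕ → ℕ) : Prop :=
  (∀ j ∈ K, S j + p j ≤ ∑ i ∈ K, p i) ∧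
    ∀ t < ∑ i ∈ K, p i, ∃ j ∈ K, S j ≤ t ∧ t < S j + p j

/-- Disruption of job `j`: `|C_j(S) - C_j(π)|`. -/
def disr (p π S : ℕ → ℕ) (j : ℕ) : ℕ :=
  (((S j + p j : ℕ) : ℤ) - ((π j + p j : ℕ) : ℤ)).natAbs

/-- Maximum disruption over the old jobs. -/
def Dmax (JO : Finset ℕ) (p π S : ℕ → ℕ) : ℕ := JO.sup (disr p π S)

/-- Total disruption over the old jobs. -/
def Dsum (JO : Finset ℕ) (p π S : ℕ → ℕ) : ℕ := ∑ j ∈ JO, disr p π S j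

/-- `S` preserves the old-job order of `π`: old jobs completing earlier in `π`
complete earlier in `S`. -/
def PreservesOrder (JO : Finset ℕ) (p π S : ℕ → ℕ) : Prop :=
  ∀ i ∈ JO, ∀ j ∈ JO, π i + p i < π j + p j → S i + p i < S j + p j

/-- Maximum lateness `max_{j ∈ J} (C_j - d_j)`. -/
def Lmax (J : Finset ℕ) (p : ℕ → ℕ) (d : ℕ → ℤ) (S : ℕ → ℕ) : WithBot ℤ :=
  J.sup fun j => (((((S j + p j : ℕ) : ℤ) - d j : ℤ)) : WithBot ℤ)

/-- Number of tardy jobs. -/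
def nTardy (J : Finset ℕ) (p : ℕ → ℕ) (d : ℕ → ℤ) (S : ℕ → ℕ) : ℕ :=
  (J.filter fun j => d j < ((S j + p j : ℕ) : ℤ)).card

/-- Total tardiness `Σ_{j ∈ J} max 0 (C_j - d_j)`. -/
def Ttot (J : Finset ℕ) (p : ℕ → ℕ) (d : ℕ → ℤ) (S : ℕ → ℕ) : ℤ :=
  ∑ j ∈ J, max 0 (((S j + p j : ℕ) : ℤ) - d j)

/-- Total completion time. -/
def Ctot (J : Finset ℕ) (p S : ℕ → ℕ) : ℕ := ∑ j ∈ J, (S j + p j)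

/-- Total weighted completion time. -/
def wCtot (J : Finset ℕ) (w p S : ℕ → ℕ) : ℕ := ∑ j ∈ J, w j * (S j + p j)

/-- Maximum of the regular costs `f_j(C_j)`. -/
def Fmax (J : Finset ℕ) (p : ℕ → ℕ) (f : ℕ → ℕ → ℝ) (S : ℕ → ℕ) : WithBot ℝ :=
  J.sup fun j => ((f j (S j + p j) : ℝ) : WithBot ℝ)

/-- Sum of the regular costs `f_j(C_j)`. -/
def Fsum (J : Finset ℕ) (p : ℕ → ℕ) (f : ℕ → ℕ → ℝ) (S : ℕ → ℕ) : ℝ :=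
  ∑ j ∈ J, f j (S j + p j)

lemma cover_le (T : Finset ℕ) (p S : ℕ → ℕ) (C : ℕ)
    (h : ∀ t < C, ∃ i ∈ T, S i ≤ t ∧ t < S i + p i) : C ≤ ∑ i ∈ T, p i := by
  have hsub : Finset.range C ⊆ T.biUnion (fun i => Finset.Ico (S i) (S i + p i)) := by
    intro t ht
    rw [Finset.mem_range] at ht
    obtain ⟨i, hi, h1, h2⟩ := h t ht
    exact Finset.mem_biUnion.2 ⟨i, hi, Finset.mem_Ico.2 ⟨h1, h2⟩⟩
  calc C = (Finset.range C).card := (Finset.card_range C).symm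
    _ ≤ _ := Finset.card_le_card hsub
    _ ≤ ∑ i ∈ T, (Finset.Ico (S i) (S i + p i)).card := Finset.card_biUnion_le
    _ = ∑ i ∈ T, p i := by simp

lemma pack_le (T : Finset ℕ) (p S : ℕ → ℕ) (B : ℕ)
    (hd : ∀ i ∈ T, ∀ j ∈ T, i ≠ j → S i + p i ≤ S j ∨ S j + p j ≤ S i)
    (hB : ∀ i ∈ T, S i + p i ≤ B) : ∑ i ∈ T, p i ≤ B := by
  have hcard : ∑ i ∈ T, p i = (T.biUnion (fun i => Finset.Ico (S i) (S i + p i))).card := by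
    rw [Finset.card_biUnion]
    · simp
    · intro i hi j hj hij
      rw [Function.onFun, Finset.disjoint_left]
      intro t ht1 ht2
      rw [Finset.mem_Ico] at ht1 ht2
      rcases hd i hi j hj hij with h | h <;> omega
  rw [hcard]
  calc _ ≤ (Finset.range B).card := Finset.card_le_card (by
        intro t ht
        obtain ⟨i, hi, hti⟩ := Finset.mem_biUnion.1 ht
        rw [Finset.mem_Ico] at hti
        rw [Finset.mem_range]
        have := hB i hi
        omega)
    _ = B := Finset.card_range B

/-- Property 3: no inserted idle time is needed when the old-job order is preserved. -/
theorem no_idle_needed_when_order_preserved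
    (JO JN : Finset ℕ) (p π : ℕ → ℕ) (f : ℕ → ℕ → ℝ)
    (hdisj : Disjoint JO JN)
    (hp : ∀ j ∈ JO ∪ JN, 0 < p j)
    (hπ : IsSchedule JO p π) (hπni : NoIdle JO p π)
    (hreg : ∀ j ∈ JO ∪ JN, Monotone (f j))
    (σ : ℕ → ℕ) (hσ : IsSchedule (JO ∪ JN) p σ)
    (hpres : PreservesOrder JO p π σ)
    (σ₀ : ℕ → ℕ) (hσ₀ : IsSchedule (JO ∪ JN) p σ₀)
    (hσ₀ni : NoIdle (JO ∪ JN) p σ₀)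
    (hsameorder : ∀ i ∈ JO ∪ JN, ∀ j ∈ JO ∪ JN, i ≠ j → (σ i < σ j ↔ σ₀ i < σ₀ j)) :
    Dmax JO p π σ₀ ≤ Dmax JO p π σ ∧
    Dsum JO p π σ₀ ≤ Dsum JO p π σ ∧
    Fmax (JO ∪ JN) p f σ₀ ≤ Fmax (JO ∪ JN) p f σ ∧
    Fsum (JO ∪ JN) p f σ₀ ≤ Fsum (JO ∪ JN) p f σ := by

  have key1 : ∀ j ∈ JO ∪ JN, σ₀ j + p j ≤ σ j + p j := by
    intro j hj
    set T := (JO ∪ JN).filter (fun i => σ₀ i + p i ≤ σ₀ j + p j) with hT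
    have hcov : σ₀ j + p j ≤ ∑ i ∈ T, p i := by
      apply cover_le
      intro t ht
      obtain ⟨i, hi, h1, h2⟩ := hσ₀ni.2 t (lt_of_lt_of_le ht (hσ₀ni.1 j hj))
      refine ⟨i, Finset.mem_filter.2 ⟨hi, ?_⟩, h1, h2⟩
      by_cases hij : i = j
      · subst hij; exact le_refl _
      · rcases hσ₀ i hi j hj hij with h | h <;> omega
    have hpack : ∑ i ∈ T, p i ≤ σ j + p j := by
      apply pack_le T p σ
      · intro i hi k hk hik
        exact hσ i (Finset.mem_filter.1 hi).1 k (Finset.mem_filter.1 hk).1 hik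
      · intro i hi
        obtain ⟨hiJ, hile⟩ := Finset.mem_filter.1 hi
        by_cases hij : i = j
        · subst hij; exact le_refl _
        · have hpi := hp i hiJ
          have hpj := hp j hj
          have h0 : σ₀ i < σ₀ j := by
            rcases hσ₀ i hiJ j hj hij with h | h <;> omega
          have h1 : σ i < σ j := (hsameorder i hiJ j hj hij).2 h0
          rcases hσ i hiJ j hj hij with h | h <;> omega
    omega
  have key2 : ∀ j ∈ JO, π j + p j ≤ σ₀ j + p j := by
    intro j hj
    have hjU : j ∈ JO ∪ JN := Finset.mem_union_left _ hj
    set T := JO.filter (fun i => π i + p i ≤ π j + p j) with hT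
    have hcov : π j + p j ≤ ∑ i ∈ T, p i := by
      apply cover_le
      intro t ht
      obtain ⟨i, hi, h1, h2⟩ := hπni.2 t (lt_of_lt_of_le ht (hπni.1 j hj))
      refine ⟨i, Finset.mem_filter.2 ⟨hi, ?_⟩, h1, h2⟩
      by_cases hij : i = j
      · subst hij; exact le_refl _
      · rcases hπ i hi j hj hij with h | h <;> omega
    have hpack : ∑ i ∈ T, p i ≤ σ₀ j + p j := by
      apply pack_le T p σ₀
      · intro i hi k hk hik
        exact hσ₀ _ (Finset.mem_union_left _ (Finset.mem_filter.1 hi).1) _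
          (Finset.mem_union_left _ (Finset.mem_filter.1 hk).1) hik
      · intro i hi
        obtain ⟨hiO, hile⟩ := Finset.mem_filter.1 hi
        have hiU : i ∈ JO ∪ JN := Finset.mem_union_left _ hiO
        by_cases hij : i = j
        · subst hij; exact le_refl _
        · have hpi := hp i hiU
          have hpj := hp j hjU
          have hlt : π i + p i < π j + p j := by
            rcases hπ i hiO j hj hij with h | h <;> omega
          have h1 : σ i + p i < σ j + p j := hpres i hiO j hj hlt
          have h2 : σ i < σ j := by
            rcases hσ i hiU j hjU hij with h | h <;> omega
          have h3 : σ₀ i < σ₀ j := (hsameorder i hiU j hjU hij).1 h2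
          rcases hσ₀ i hiU j hjU hij with h | h <;> omega
    omega
  refine ⟨?_, ?_, ?_, ?_⟩
  · apply Finset.sup_mono_fun
    intro j hj
    have h1 := key2 j hj
    have h2 := key1 j (Finset.mem_union_left _ hj)
    simp only [disr]
    omega
  · apply Finset.sum_le_sum
    intro j hj
    have h1 := key2 j hj
    have h2 := key1 j (Finset.mem_union_left _ hj)
    simp only [disr]
    omega
  · apply Finset.sup_mono_fun
    intro j hj
    exact_mod_cast hreg j hj (key1 j hj)
  · exact Finset.sum_le_sum (fun j hj => hreg j hj (key1 j hj))
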